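/- The monic Charlier polynomial 𝒞_n(x; α) = Σ_{k=0}^n C(n,k) (-α)^{n-k} (x)_k satisfies the orthogonality relation Σ_{ℓ=0}^∞ 𝒞_n(ℓ; α) 𝒞_m(ℓ; α) e^{-α} α^ℓ/ℓ! = 1{n=m} · α^n · n! for all n, m ∈ ℕ and α > 0. -/

import Mathlib

/-- The monic Charlier polynomial `𝒞_n(x; α) = ∑_{k=0}^n C(n,k) (-α)^{n-k} (x)_k`. -/
noncomputable def charlier (n : ℕ) (α : ℝ) (x : ℕ) : ℝ :=
  ∑ k ∈ Finset.range (n + 1),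
    (n.choose k : ℝ) * (-α) ^ (n - k) * (x.descFactorial k : ℝ)

open Finset

namespace CharlierAux


noncomputable def P (α : ℝ) (ℓ : ℕ) : ℝ := Real.exp (-α) * α ^ ℓ / (ℓ.factorial : ℝ)

lemma hasSum_P (α : ℝ) : HasSum (P α) 1 := by
  have h := NormedSpace.expSeries_div_hasSum_exp α
  rw [← Real.exp_eq_exp_ℝ] at h
  have h2 := h.mul_left (Real.exp (-α))
  have he : Real.exp (-α) * Real.exp α = 1 := by
    rw [← Real.exp_add]; simp
  rw [he] at h2
  have : P α = fun i => Real.exp (-α) * (α ^ i / (i.factorial : ℝ)) := by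
    funext i; rw [P, mul_div_assoc]
  rw [this]; exact h2

lemma desc_mul_P (α : ℝ) (k s : ℕ) :
    ((s + k).descFactorial k : ℝ) * P α (s + k) = α ^ k * P α s := by
  have hD : (s.factorial) * (s + k).descFactorial k = (s + k).factorial := by
    have := Nat.factorial_mul_descFactorial (Nat.le_add_left k s)
    simpa using this
  have hs : ((s.factorial : ℝ)) ≠ 0 := Nat.cast_ne_zero.2 s.factorial_ne_zero
  have hsk : (((s + k).factorial : ℝ)) ≠ 0 := Nat.cast_ne_zero.2 (s + k).factorial_ne_zero
  have hD' : ((s + k).descFactorial k : ℝ) = ((s + k).factorial : ℝ) / (s.factorial : ℝ) := by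
    rw [eq_div_iff hs]
    have := congrArg (Nat.cast (R := ℝ)) hD
    push_cast at this
    linarith
  rw [hD', P, P, pow_add]
  field_simp

/-- Shift lemma: summing `g ℓ * (ℓ)_k * P ℓ` reduces to summing `g (s+k) * P s`. -/
lemma hasSum_shift (α : ℝ) (k : ℕ) (g : ℕ → ℝ) {a : ℝ}
    (h : HasSum (fun s => g (s + k) * P α s) a) :
    HasSum (fun ℓ => g ℓ * (ℓ.descFactorial k : ℝ) * P α ℓ) (α ^ k * a) := by
  set f : ℕ → ℝ := fun ℓ => g ℓ * (ℓ.descFactorial k : ℝ) * P α ℓ with hf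
  have hinj : Function.Injective (fun s : ℕ => s + k) := add_left_injective k
  have hvan : ∀ ℓ ∉ Set.range (fun s : ℕ => s + k), f ℓ = 0 := by
    intro ℓ hℓ
    have hlt : ℓ < k := by
      by_contra hge
      exact hℓ ⟨ℓ - k, by simp; omega⟩
    simp [hf, Nat.descFactorial_eq_zero_iff_lt.2 hlt]
  rw [← hinj.hasSum_iff hvan]
  have : (f ∘ fun s : ℕ => s + k) = fun s => α ^ k * (g (s + k) * P α s) := by
    funext s
    simp only [Function.comp, hf]
    rw [mul_assoc, desc_mul_P]
    ring
  rw [this]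
  exact h.mul_left _

lemma hasSum_moment (α : ℝ) (i : ℕ) :
    HasSum (fun ℓ => (ℓ.descFactorial i : ℝ) * P α ℓ) (α ^ i) := by
  have := hasSum_shift α i (fun _ => 1) (by simpa using hasSum_P α)
  simpa using this

/-- Vandermonde for descending factorials, in ℕ. -/
lemma vander (s k j : ℕ) :
    (s + k).descFactorial j
      = ∑ a ∈ range (j + 1), j.choose a * s.descFactorial a * k.descFactorial (j - a) := by
  rw [Nat.descFactorial_eq_factorial_mul_choose, Nat.add_choose_eq, Finset.mul_sum,
    Finset.Nat.sum_antidiagonal_eq_sum_range_succ_mk]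
  refine Finset.sum_congr rfl fun a ha => ?_
  have haj : a ≤ j := by simpa [Nat.lt_succ_iff] using ha
  rw [Nat.descFactorial_eq_factorial_mul_choose s, Nat.descFactorial_eq_factorial_mul_choose k,
    ← Nat.choose_mul_factorial_mul_factorial haj]
  ring

lemma hasSum_moment2 (α : ℝ) (j k : ℕ) :
    HasSum (fun ℓ => (ℓ.descFactorial j : ℝ) * (ℓ.descFactorial k : ℝ) * P α ℓ)
      (α ^ k * ∑ a ∈ range (j + 1),
        (j.choose a : ℝ) * (k.descFactorial (j - a) : ℝ) * α ^ a) := by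
  apply hasSum_shift α k (fun ℓ => (ℓ.descFactorial j : ℝ))
  have hpt : (fun s : ℕ => ((s + k).descFactorial j : ℝ) * P α s)
      = fun s => ∑ a ∈ range (j + 1),
          ((j.choose a : ℝ) * (k.descFactorial (j - a) : ℝ)) * ((s.descFactorial a : ℝ) * P α s) := by
    funext s
    rw [vander s k j]
    push_cast
    rw [Finset.sum_mul]
    refine Finset.sum_congr rfl fun a _ => by ring
  rw [hpt]
  have := hasSum_sum (s := range (j + 1))
    (f := fun a (s : ℕ) => ((j.choose a : ℝ) * (k.descFactorial (j - a) : ℝ)) * ((s.descFactorial a : ℝ) * P α s))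
    (a := fun a => ((j.choose a : ℝ) * (k.descFactorial (j - a) : ℝ)) * α ^ a)
    (fun a _ => (hasSum_moment α a).mul_left _)
  exact this



lemma collapse (α : ℝ) {b N : ℕ} (hb : b ≤ N) :
    ∑ j ∈ Finset.Ico b (N + 1), (N.choose j : ℝ) * (j.choose b : ℝ) * (-α) ^ (N - j) * α ^ (j - b)
      = (N.choose b : ℝ) * (0 : ℝ) ^ (N - b) := by
  rw [Finset.sum_Ico_eq_sum_range]
  have hN : N + 1 - b = (N - b) + 1 := by omega
  rw [hN]
  have key : ∀ t ∈ range ((N - b) + 1),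
      (N.choose (b + t) : ℝ) * ((b + t).choose b : ℝ) * (-α) ^ (N - (b + t)) * α ^ (b + t - b)
        = (N.choose b : ℝ) * (α ^ t * (-α) ^ ((N - b) - t) * ((N - b).choose t : ℝ)) := by
    intro t ht
    have htb : b + t ≤ N := by
      simp only [mem_range] at ht; omega
    have hc : N.choose (b + t) * (b + t).choose b = N.choose b * (N - b).choose t := by
      have := Nat.choose_mul (n := N) (Nat.le_add_right b t)
      simpa [Nat.add_sub_cancel_left] using this
    have hc' : (N.choose (b + t) : ℝ) * ((b + t).choose b : ℝ)
        = (N.choose b : ℝ) * ((N - b).choose t : ℝ) := by exact_mod_cast congrArg (Nat.cast (R := ℝ)) hc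
    have h1 : N - (b + t) = (N - b) - t := by omega
    have h2 : b + t - b = t := by omega
    rw [h1, h2, hc']
    ring
  rw [Finset.sum_congr rfl key, ← Finset.mul_sum, ← add_pow α (-α) (N - b)]
  norm_num

lemma fin_sum (α : ℝ) (n m : ℕ) :
    ∑ k ∈ range (m + 1), (m.choose k : ℝ) * (-α) ^ (m - k) * (α ^ k * (k.descFactorial n : ℝ))
      = if n = m then α ^ n * (n.factorial : ℝ) else 0 := by
  rcases lt_or_ge m n with h | h
  · rw [if_neg (by omega)]
    refine Finset.sum_eq_zero fun k hk => ?_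
    have : k < n := by simp only [mem_range] at hk; omega
    simp [Nat.descFactorial_eq_zero_iff_lt.2 this]
  · -- n ≤ m
    have hsub : ∑ k ∈ range (m + 1), (m.choose k : ℝ) * (-α) ^ (m - k) * (α ^ k * (k.descFactorial n : ℝ))
        = ∑ k ∈ Finset.Ico n (m + 1), (m.choose k : ℝ) * (-α) ^ (m - k) * (α ^ k * (k.descFactorial n : ℝ)) := by
      rw [Finset.range_eq_Ico]
      refine (Finset.sum_subset (Finset.Ico_subset_Ico (Nat.zero_le n) le_rfl) ?_).symm
      intro k hk hk'
      simp only [Finset.mem_Ico] at hk hk'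
      have : k < n := by omega
      simp [Nat.descFactorial_eq_zero_iff_lt.2 this]
    rw [hsub]
    have hterm : ∀ k ∈ Finset.Ico n (m + 1),
        (m.choose k : ℝ) * (-α) ^ (m - k) * (α ^ k * (k.descFactorial n : ℝ))
          = ((n.factorial : ℝ) * α ^ n) * ((m.choose k : ℝ) * (k.choose n : ℝ) * (-α) ^ (m - k) * α ^ (k - n)) := by
      intro k hk
      simp only [Finset.mem_Ico] at hk
      have hkn : n ≤ k := hk.1
      have hdesc : (k.descFactorial n : ℝ) = (n.factorial : ℝ) * (k.choose n : ℝ) := by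
        exact_mod_cast congrArg (Nat.cast (R := ℝ)) (Nat.descFactorial_eq_factorial_mul_choose k n)
      have hpow : α ^ k = α ^ n * α ^ (k - n) := by
        rw [← pow_add]; congr 1; omega
      rw [hdesc, hpow]; ring
    rw [Finset.sum_congr rfl hterm, ← Finset.mul_sum, collapse α h]
    rcases eq_or_lt_of_le h with rfl | hlt
    · simp [mul_comm]
    · rw [if_neg (by omega), zero_pow (by omega), mul_zero, mul_zero]

lemma inner_sum (α : ℝ) (n k : ℕ) :
    ∑ j ∈ range (n + 1), (n.choose j : ℝ) * (-α) ^ (n - j) *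
        (∑ a ∈ range (j + 1), (j.choose a : ℝ) * (k.descFactorial (j - a) : ℝ) * α ^ a)
      = (k.descFactorial n : ℝ) := by
  have refl : ∀ j : ℕ, ∑ a ∈ range (j + 1), (j.choose a : ℝ) * (k.descFactorial (j - a) : ℝ) * α ^ a
      = ∑ b ∈ range (j + 1), (j.choose b : ℝ) * (k.descFactorial b : ℝ) * α ^ (j - b) := by
    intro j
    rw [← Finset.sum_range_reflect]
    refine Finset.sum_congr rfl fun b hb => ?_
    have hbj : b ≤ j := by simp only [mem_range] at hb; omega
    have h1 : j + 1 - 1 - b = j - b := by omega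
    have h2 : j - (j - b) = b := by omega
    rw [h1, h2, Nat.choose_symm hbj]
  simp only [refl]
  -- turn into double sum and swap
  have hswap : ∑ j ∈ range (n + 1), ∑ b ∈ range (j + 1),
        (n.choose j : ℝ) * (-α) ^ (n - j) * ((j.choose b : ℝ) * (k.descFactorial b : ℝ) * α ^ (j - b))
      = ∑ b ∈ range (n + 1), ∑ j ∈ Finset.Ico b (n + 1),
        (n.choose j : ℝ) * (-α) ^ (n - j) * ((j.choose b : ℝ) * (k.descFactorial b : ℝ) * α ^ (j - b)) := by
    simp only [Finset.range_eq_Ico]; rw [← Finset.sum_Ico_Ico_comm 0 (n + 1)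
      (fun b j => (n.choose j : ℝ) * (-α) ^ (n - j) * ((j.choose b : ℝ) * (k.descFactorial b : ℝ) * α ^ (j - b)))]
  rw [show (∑ j ∈ range (n + 1), (n.choose j : ℝ) * (-α) ^ (n - j) *
        (∑ b ∈ range (j + 1), (j.choose b : ℝ) * (k.descFactorial b : ℝ) * α ^ (j - b)))
      = ∑ j ∈ range (n + 1), ∑ b ∈ range (j + 1),
        (n.choose j : ℝ) * (-α) ^ (n - j) * ((j.choose b : ℝ) * (k.descFactorial b : ℝ) * α ^ (j - b))
    from Finset.sum_congr rfl fun j _ => Finset.mul_sum _ _ _, hswap]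
  have hinner : ∀ b ∈ range (n + 1),
      ∑ j ∈ Finset.Ico b (n + 1),
          (n.choose j : ℝ) * (-α) ^ (n - j) * ((j.choose b : ℝ) * (k.descFactorial b : ℝ) * α ^ (j - b))
        = (k.descFactorial b : ℝ) * ((n.choose b : ℝ) * (0 : ℝ) ^ (n - b)) := by
    intro b hb
    have hbn : b ≤ n := by simp only [mem_range] at hb; omega
    rw [← collapse α hbn, Finset.mul_sum]
    refine Finset.sum_congr rfl fun j hj => by ring
  rw [Finset.sum_congr rfl hinner]
  rw [Finset.sum_eq_single n]
  · simp
  · intro b hb hbn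
    have : 0 < n - b := by simp only [mem_range] at hb; omega
    simp [zero_pow (by omega : n - b ≠ 0)]
  · intro h; exact absurd (self_mem_range_succ n) h


lemma hasSum_main (α : ℝ) (n m : ℕ) :
    HasSum (fun ℓ => charlier n α ℓ * charlier m α ℓ * P α ℓ)
      (∑ j ∈ range (n + 1), ∑ k ∈ range (m + 1),
        ((n.choose j : ℝ) * (-α) ^ (n - j) * ((m.choose k : ℝ) * (-α) ^ (m - k))) *
          (α ^ k * ∑ a ∈ range (j + 1),
            (j.choose a : ℝ) * (k.descFactorial (j - a) : ℝ) * α ^ a)) := by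
  have hpt : (fun ℓ => charlier n α ℓ * charlier m α ℓ * P α ℓ)
      = fun ℓ => ∑ j ∈ range (n + 1), ∑ k ∈ range (m + 1),
          ((n.choose j : ℝ) * (-α) ^ (n - j) * ((m.choose k : ℝ) * (-α) ^ (m - k))) *
            ((ℓ.descFactorial j : ℝ) * (ℓ.descFactorial k : ℝ) * P α ℓ) := by
    funext ℓ
    rw [charlier, charlier, Finset.sum_mul_sum, Finset.sum_mul]
    refine Finset.sum_congr rfl fun j _ => ?_
    rw [Finset.sum_mul]
    exact Finset.sum_congr rfl fun k _ => by ring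
  rw [hpt]
  exact hasSum_sum fun j _ => hasSum_sum fun k _ => (hasSum_moment2 α j k).mul_left _

lemma algebra (α : ℝ) (n m : ℕ) :
    (∑ j ∈ range (n + 1), ∑ k ∈ range (m + 1),
        ((n.choose j : ℝ) * (-α) ^ (n - j) * ((m.choose k : ℝ) * (-α) ^ (m - k))) *
          (α ^ k * ∑ a ∈ range (j + 1),
            (j.choose a : ℝ) * (k.descFactorial (j - a) : ℝ) * α ^ a))
      = if n = m then α ^ n * (n.factorial : ℝ) else 0 := by
  rw [Finset.sum_comm]
  rw [← fin_sum α n m]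
  refine Finset.sum_congr rfl fun k _ => ?_
  rw [← inner_sum α n k, Finset.mul_sum, Finset.mul_sum]
  refine Finset.sum_congr rfl fun j _ => by ring

end CharlierAux

/-- orthogonality of the monic Charlier polynomials with respect to the
Poisson distribution: `∑_ℓ 𝒞_n(ℓ;α) 𝒞_m(ℓ;α) e^{-α} α^ℓ/ℓ! = 1{n=m} α^n n!`. -/
theorem stmt2 (α : ℝ) (hα : 0 < α) (n m : ℕ) :
    ∑' ℓ : ℕ, charlier n α ℓ * charlier m α ℓ *
        (Real.exp (-α) * α ^ ℓ / (ℓ.factorial : ℝ))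
      = if n = m then α ^ n * (n.factorial : ℝ) else 0 := by
  have h := (CharlierAux.hasSum_main α n m).tsum_eq
  rw [CharlierAux.algebra α n m] at h
  simpa [CharlierAux.P] using h
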